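/- Let X ∈ R^{n×p}, w ∈ R^p with support S, and suppose the Gram matrix σ = XᵀX satisfies: the graph on S with edges {(i,j) : σ_{ij} ≠ 0} decomposes S into connected components S_1,…,S_m. Then the trace Lasso decomposes over the components: ‖X·Diag(w)‖_* = Σ_{k=1}^m ‖X·Diag(w_{S_k})‖_*. -/

import Mathlib

noncomputable def traceNorm {n p : ℕ} (M : Matrix (Fin n) (Fin p) ℝ) : ℝ :=
  ((Matrix.posSemidef_conjTranspose_mul_self M).1.eigenvectorUnitary.1 *
    Matrix.diagonal ((RCLike.ofReal : ℝ → ℝ) ∘ (Real.sqrt ·) ∘ (Matrix.posSemidef_conjTranspose_mul_self M).1.eigenvalues) *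
    (star (Matrix.posSemidef_conjTranspose_mul_self M).1.eigenvectorUnitary : Matrix (Fin p) (Fin p) ℝ)).trace

open Matrix

namespace Matrix.PosSemidef

noncomputable def sqrt {q : ℕ} {A : Matrix (Fin q) (Fin q) ℝ} (hA : A.PosSemidef) :
    Matrix (Fin q) (Fin q) ℝ :=
  hA.1.eigenvectorUnitary.1 *
    Matrix.diagonal ((RCLike.ofReal : ℝ → ℝ) ∘ (Real.sqrt ·) ∘ hA.1.eigenvalues) *
    (star hA.1.eigenvectorUnitary : Matrix (Fin q) (Fin q) ℝ)

lemma sqrt_eq_cfc {q : ℕ} {A : Matrix (Fin q) (Fin q) ℝ} (hA : A.PosSemidef) :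
    hA.sqrt = cfc Real.sqrt A := by
  rw [hA.1.cfc_eq, IsHermitian.cfc, Unitary.conjStarAlgAut_apply]; rfl

lemma spectrum_nonneg' {q : ℕ} {A : Matrix (Fin q) (Fin q) ℝ} (hA : A.PosSemidef) :
    ∀ x ∈ spectrum ℝ A, 0 ≤ x := fun x hx =>
  (Matrix.posSemidef_iff_isHermitian_and_spectrum_nonneg.mp hA).2 hx

lemma posSemidef_sqrt {q : ℕ} {A : Matrix (Fin q) (Fin q) ℝ} (hA : A.PosSemidef) :
    hA.sqrt.PosSemidef := by
  have hD : (Matrix.diagonal ((RCLike.ofReal : ℝ → ℝ) ∘ (Real.sqrt ·) ∘ hA.1.eigenvalues)).PosSemidef := by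
    rw [posSemidef_diagonal_iff]
    intro i
    exact Real.sqrt_nonneg _
  have := hD.mul_mul_conjTranspose_same (hA.1.eigenvectorUnitary.1)
  unfold sqrt
  rwa [Matrix.star_eq_conjTranspose]

lemma sqrt_mul_self {q : ℕ} {A : Matrix (Fin q) (Fin q) ℝ} (hA : A.PosSemidef) :
    hA.sqrt * hA.sqrt = A := by
  have hsa : IsSelfAdjoint A := hA.1
  rw [sqrt_eq_cfc, ← cfc_mul Real.sqrt Real.sqrt A]
  conv_rhs => rw [← cfc_id' ℝ A]
  refine cfc_congr fun x hx => ?_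
  exact Real.mul_self_sqrt (hA.spectrum_nonneg' x hx)

lemma eq_sqrt_of_sq_eq {q : ℕ} {A B : Matrix (Fin q) (Fin q) ℝ} (hB : B.PosSemidef)
    (hA : A.PosSemidef) (h : B ^ 2 = A) : B = hA.sqrt := by
  have hsa : IsSelfAdjoint B := hB.1
  subst h
  rw [sqrt_eq_cfc, ← cfc_comp_pow Real.sqrt 2 B]
  conv_lhs => rw [← cfc_id' ℝ B]
  refine cfc_congr fun x hx => ?_
  exact (Real.sqrt_sq (hB.spectrum_nonneg' x hx)).symm

end Matrix.PosSemidef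

/-- If `A` is PSD and `A * B = 0`, then `sqrt A * B = 0`. -/
lemma sqrt_mul_eq_zero {q : ℕ} {A B : Matrix (Fin q) (Fin q) ℝ}
    (hA : A.PosSemidef) (h : A * B = 0) : hA.sqrt * B = 0 := by
  have h1 : (hA.sqrt * B)ᴴ * (hA.sqrt * B) = 0 := by
    have hs : hA.sqrtᴴ = hA.sqrt := hA.posSemidef_sqrt.1
    calc (hA.sqrt * B)ᴴ * (hA.sqrt * B) = Bᴴ * (hA.sqrt * hA.sqrt) * B := by
          rw [conjTranspose_mul, hs]; noncomm_ring
      _ = Bᴴ * (A * B) := by rw [hA.sqrt_mul_self, mul_assoc]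
      _ = 0 := by rw [h, mul_zero]
  exact conjTranspose_mul_self_eq_zero.mp h1

lemma sqrt_mul_sqrt_eq_zero {q : ℕ} {A B : Matrix (Fin q) (Fin q) ℝ}
    (hA : A.PosSemidef) (hB : B.PosSemidef) (h : A * B = 0) :
    hA.sqrt * hB.sqrt = 0 := by
  have h1 : hA.sqrt * B = 0 := sqrt_mul_eq_zero hA h
  have h2 : B * hA.sqrt = 0 := by
    have := congrArg conjTranspose h1
    rwa [conjTranspose_mul, hA.posSemidef_sqrt.1, hB.1, conjTranspose_zero] at this
  have h3 : hB.sqrt * hA.sqrt = 0 := sqrt_mul_eq_zero hB h2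
  have := congrArg conjTranspose h3
  rwa [conjTranspose_mul, hA.posSemidef_sqrt.1, hB.posSemidef_sqrt.1,
    conjTranspose_zero] at this

lemma gram_entry {n p : ℕ} (X : Matrix (Fin n) (Fin p) ℝ) (u : Fin p → ℝ) (i j : Fin p) :
    ((X * Matrix.diagonal u)ᴴ * (X * Matrix.diagonal u)) i j
      = u i * u j * ∑ l, X l i * X l j := by
  rw [Matrix.mul_apply, Finset.mul_sum]
  simp only [Matrix.conjTranspose_apply, Matrix.mul_diagonal, star_trivial]
  exact Finset.sum_congr rfl fun l _ => by ring

theorem trace_lasso_decomposes_over_components {n p m : ℕ}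
    (X : Matrix (Fin n) (Fin p) ℝ) (w : Fin p → ℝ) (c : Fin p → Fin m)
    (horth : ∀ i j : Fin p, w i ≠ 0 → w j ≠ 0 → c i ≠ c j → ∑ l, X l i * X l j = 0) :
    traceNorm (X * Matrix.diagonal w) =
      ∑ k : Fin m,
        traceNorm (X * Matrix.diagonal fun i => if c i = k then w i else 0) := by
  classical
  let v : Fin m → Fin p → ℝ := fun k i => if c i = k then w i else 0
  let M : Matrix (Fin n) (Fin p) ℝ := X * Matrix.diagonal w
  let Mk : Fin m → Matrix (Fin n) (Fin p) ℝ := fun k => X * Matrix.diagonal (v k)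
  let σ : Fin p → Fin p → ℝ := fun i j => ∑ l, X l i * X l j
  let A : Matrix (Fin p) (Fin p) ℝ := Mᴴ * M
  let Ak : Fin m → Matrix (Fin p) (Fin p) ℝ := fun k => (Mk k)ᴴ * (Mk k)
  have hAe : ∀ i j, A i j = w i * w j * σ i j := fun i j => gram_entry X w i j
  have hAke : ∀ k i j, Ak k i j = v k i * v k j * σ i j := fun k i j => gram_entry X (v k) i j
  have hApsd : A.PosSemidef := Matrix.posSemidef_conjTranspose_mul_self M
  have hAkpsd : ∀ k, (Ak k).PosSemidef := fun k => Matrix.posSemidef_conjTranspose_mul_self (Mk k)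
  -- decomposition of the Gram matrix
  have hsum : A = ∑ k, Ak k := by
    ext i j
    rw [Matrix.sum_apply, hAe]
    by_cases hij : c i = c j
    · rw [Finset.sum_eq_single (c i)]
      · rw [hAke]; simp [v, hij]
      · intro k _ hk
        rw [hAke]
        simp only [v]
        rw [if_neg (fun h => hk h.symm)]
        ring
      · simp
    · have hz : w i * w j * σ i j = 0 := by
        by_cases hwi : w i = 0
        · rw [hwi]; ring
        by_cases hwj : w j = 0
        · rw [hwj]; ring
        · have : σ i j = 0 := horth i j hwi hwj hij
          rw [this]; ring
      rw [hz]
      refine (Finset.sum_eq_zero fun k _ => ?_).symm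
      rw [hAke]
      by_cases h1 : c i = k
      · have h2 : c j ≠ k := fun h => hij (h1.trans h.symm)
        simp only [v]; rw [if_neg h2]; ring
      · simp only [v]; rw [if_neg h1]; ring
  -- the pieces annihilate each other
  have hzero : ∀ k l : Fin m, k ≠ l → Ak k * Ak l = 0 := by
    intro k l hkl
    ext i j
    rw [Matrix.mul_apply]
    refine Finset.sum_eq_zero fun t _ => ?_
    rw [hAke, hAke]
    by_cases h1 : c t = k
    · have h2 : c t ≠ l := fun h => hkl (h1.symm.trans h)
      simp only [v]; rw [if_neg h2]; ring
    · simp only [v]; rw [if_neg h1]; ring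
  -- sum of square roots is the square root of the sum
  have hS : (∑ k, (hAkpsd k).sqrt) = hApsd.sqrt := by
    have hSpsd : (∑ k, (hAkpsd k).sqrt).PosSemidef :=
      Finset.sum_induction _ (fun N : Matrix (Fin p) (Fin p) ℝ => N.PosSemidef) (fun a b ha hb => ha.add hb)
        (Matrix.PosSemidef.zero) (fun k _ => (hAkpsd k).posSemidef_sqrt)
    refine hSpsd.eq_sqrt_of_sq_eq hApsd ?_
    rw [pow_two, Finset.sum_mul_sum, hsum]
    refine Finset.sum_congr rfl fun k _ => ?_
    rw [Finset.sum_eq_single k]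
    · exact (hAkpsd k).sqrt_mul_self
    · intro l _ hlk
      exact sqrt_mul_sqrt_eq_zero (hAkpsd k) (hAkpsd l) (hzero k l (Ne.symm hlk))
    · simp
  calc traceNorm M = hApsd.sqrt.trace := rfl
    _ = (∑ k, (hAkpsd k).sqrt).trace := by rw [hS]
    _ = ∑ k, ((hAkpsd k).sqrt).trace := by rw [trace_sum]
    _ = ∑ k, traceNorm (Mk k) := rfl
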